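/- Small-ε expansion of the variance: for every natural number N ≥ 1, the second moment m₂(N), regarded as a function of ε, is a polynomial in ε, and there exists a polynomial function R : ℝ → ℝ such that m₂(N) = N + 2N(N−1)·ε + (8/3)·N(N−1)(N−2)·ε² + ε³·R(ε) for all ε ∈ ℝ. -/

import Mathlib

/-- The discrete stochastic process with memory: binomial transfer probabilities
with coupling `ε`. -/
noncomputable def P (ε : ℝ) : ℕ → ℤ → ℝ
  | 0, x => if x = 0 then 1 else 0
  | n + 1, x =>
      P ε n (x + 1) * (1 / 2 - ((x : ℝ) + 1) * ε) +
      P ε n (x - 1) * (1 / 2 + ((x : ℝ) - 1) * ε)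

/-- The `k`-th moment `m_k(n; ε) = Σ_{x ∈ ℤ} x^k · P(n, x)` (depending on `ε` through `P`). -/
noncomputable def m (ε : ℝ) (k n : ℕ) : ℝ := ∑' x : ℤ, (x : ℝ) ^ k * P ε n x

lemma P_zero (ε : ℝ) : ∀ (n : ℕ) (x : ℤ), n < x.natAbs → P ε n x = 0
  | 0, x, h => by
      have hx : x ≠ 0 := by omega
      simp [P, hx]
  | n+1, x, h => by
      rw [P, P_zero ε n (x+1) (by omega), P_zero ε n (x-1) (by omega)]
      ring

lemma summable_P (ε : ℝ) (n : ℕ) (g : ℤ → ℝ) :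
    Summable (fun x : ℤ => g x * P ε n x) :=
  summable_of_ne_finset_zero (s := Finset.Icc (-(n:ℤ)) n) fun x hx => by
    rw [P_zero ε n x (by simp [Finset.mem_Icc] at hx; omega), mul_zero]

lemma m_step (ε : ℝ) (k n : ℕ) :
    m ε k (n+1) = ∑' y : ℤ,
      ((((y:ℝ)-1)^k * (1/2 - (y:ℝ)*ε) + ((y:ℝ)+1)^k * (1/2 + (y:ℝ)*ε)) * P ε n y) := by
  have h1 : Summable (fun x : ℤ => (x:ℝ)^k * (P ε n (x+1) * (1/2 - ((x:ℝ)+1)*ε))) :=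
    summable_of_ne_finset_zero (s := Finset.Icc (-(n:ℤ)-1) ((n:ℤ)+1)) fun x hx => by
      rw [P_zero ε n (x+1) (by simp [Finset.mem_Icc] at hx; omega)]
      ring
  have h2 : Summable (fun x : ℤ => (x:ℝ)^k * (P ε n (x-1) * (1/2 + ((x:ℝ)-1)*ε))) :=
    summable_of_ne_finset_zero (s := Finset.Icc (-(n:ℤ)-1) ((n:ℤ)+1)) fun x hx => by
      rw [P_zero ε n (x-1) (by simp [Finset.mem_Icc] at hx; omega)]
      ring
  have e1 : ∑' x : ℤ, (x:ℝ)^k * (P ε n (x+1) * (1/2 - ((x:ℝ)+1)*ε))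
      = ∑' y : ℤ, (((y:ℝ)-1)^k * (1/2 - (y:ℝ)*ε)) * P ε n y := by
    rw [← Equiv.tsum_eq (Equiv.addRight (1:ℤ))
      (fun y : ℤ => (((y:ℝ)-1)^k * (1/2 - (y:ℝ)*ε)) * P ε n y)]
    refine tsum_congr fun x => ?_
    simp only [Equiv.coe_addRight]
    push_cast
    ring
  have e2 : ∑' x : ℤ, (x:ℝ)^k * (P ε n (x-1) * (1/2 + ((x:ℝ)-1)*ε))
      = ∑' y : ℤ, (((y:ℝ)+1)^k * (1/2 + (y:ℝ)*ε)) * P ε n y := by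
    rw [← Equiv.tsum_eq (Equiv.subRight (1:ℤ))
      (fun y : ℤ => (((y:ℝ)+1)^k * (1/2 + (y:ℝ)*ε)) * P ε n y)]
    refine tsum_congr fun x => ?_
    simp only [Equiv.subRight_apply]
    push_cast
    ring
  have hm : m ε k (n+1) = ∑' x : ℤ,
      ((x:ℝ)^k * (P ε n (x+1) * (1/2 - ((x:ℝ)+1)*ε))
        + (x:ℝ)^k * (P ε n (x-1) * (1/2 + ((x:ℝ)-1)*ε))) := by
    refine tsum_congr fun x => ?_
    rw [P]
    ring
  rw [hm, Summable.tsum_add h1 h2, e1, e2,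
    ← Summable.tsum_add (summable_P ε n _) (summable_P ε n _)]
  refine tsum_congr fun y => ?_
  ring

lemma m_zero_eq_one (ε : ℝ) : ∀ n : ℕ, m ε 0 n = 1
  | 0 => by
      unfold m
      simp only [pow_zero, one_mul, P]
      exact tsum_ite_eq (0 : ℤ) (fun _ => (1 : ℝ))
  | n+1 => by
      rw [m_step]
      have h : ∀ y : ℤ,
          (((y:ℝ)-1)^0 * (1/2 - (y:ℝ)*ε) + ((y:ℝ)+1)^0 * (1/2 + (y:ℝ)*ε)) * P ε n y
            = (y:ℝ)^0 * P ε n y := fun y => by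
        simp only [pow_zero]
        ring
      rw [tsum_congr h]
      exact m_zero_eq_one ε n

lemma m2_rec (ε : ℝ) (n : ℕ) : m ε 2 (n+1) = (1 + 4*ε) * m ε 2 n + 1 := by
  rw [m_step]
  have key : ∀ y : ℤ,
      (((y:ℝ)-1)^2 * (1/2 - (y:ℝ)*ε) + ((y:ℝ)+1)^2 * (1/2 + (y:ℝ)*ε)) * P ε n y
        = (1+4*ε) * ((y:ℝ)^2 * P ε n y) + (y:ℝ)^0 * P ε n y := fun y => by ring
  rw [tsum_congr key,
    Summable.tsum_add ((summable_P ε n (fun y : ℤ => (y:ℝ)^2)).mul_left (1+4*ε))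
      (summable_P ε n (fun y : ℤ => (y:ℝ)^0)),
    tsum_mul_left]
  have h0 : (∑' y : ℤ, (y:ℝ)^0 * P ε n y) = 1 := m_zero_eq_one ε n
  rw [h0]
  rfl

lemma m2_zero (ε : ℝ) : m ε 2 0 = 0 := by
  unfold m
  have : ∀ x : ℤ, (x:ℝ)^2 * P ε 0 x = 0 := fun x => by
    by_cases hx : x = 0
    · subst hx; simp [P]
    · simp [P, hx]
  rw [tsum_congr this, tsum_zero]

lemma main_exp (N : ℕ) : ∃ R : Polynomial ℝ, ∀ ε : ℝ,
    m ε 2 N =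
      (N : ℝ) + 2 * (N : ℝ) * ((N : ℝ) - 1) * ε +
        (8 / 3) * (N : ℝ) * ((N : ℝ) - 1) * ((N : ℝ) - 2) * ε ^ 2 +
        ε ^ 3 * R.eval ε := by
  induction N with
  | zero =>
      refine ⟨0, fun ε => ?_⟩
      rw [m2_zero]
      simp
  | succ N ih =>
      obtain ⟨R, hR⟩ := ih
      refine ⟨Polynomial.C ((32/3) * (N:ℝ) * ((N:ℝ)-1) * ((N:ℝ)-2))
        + (1 + 4 * Polynomial.X) * R, fun ε => ?_⟩
      rw [m2_rec, hR ε]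
      simp only [Polynomial.eval_add, Polynomial.eval_mul, Polynomial.eval_C,
        Polynomial.eval_one, Polynomial.eval_X, Polynomial.eval_ofNat]
      push_cast
      ring

theorem variance_small_eps_expansion (N : ℕ) (hN : 1 ≤ N) :
    ∃ R : Polynomial ℝ, ∀ ε : ℝ,
      m ε 2 N =
        (N : ℝ) + 2 * (N : ℝ) * ((N : ℝ) - 1) * ε +
          (8 / 3) * (N : ℝ) * ((N : ℝ) - 1) * ((N : ℝ) - 2) * ε ^ 2 +
          ε ^ 3 * R.eval ε :=
  main_exp N
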